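/- Let ρ = Σ_i p_i |φ_i⟩⟨φ_i| be a full-rank density operator on a finite-dimensional Hilbert space S and H_S a Hermitian operator on S. Define the Hermitian operator H_A = −2 Σ_{i,j} (√(p_i p_j)/(p_i + p_j)) ⟨φ_i|H_S|φ_j⟩ |φ_j⟩⟨φ_i| on a copy A of S, and the purification |Φ_ρ⟩ = Σ_i √p_i |φ_i⟩ ⊗ |φ_i⟩. Then for H_tot = H_S ⊗ I + I ⊗ H_A, the energy variance of |Φ_ρ⟩ equals one quarter of the quantum Fisher information: ⟨Φ_ρ|H_tot²|Φ_ρ⟩ − ⟨Φ_ρ|H_tot|Φ_ρ⟩² = (1/4) F_{H_S}(ρ) = (1/2) Σ_{i,j} ((p_i − p_j)²/(p_i + p_j)) |⟨φ_i|H_S|φ_j⟩|². -/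

import Mathlib

open Matrix BigOperators

/-- Matrix element ⟨v|A|w⟩. -/
noncomputable def matElem {n : Type*} [Fintype n] (v : n → ℂ)
    (A : Matrix n n ℂ) (w : n → ℂ) : ℂ :=
  star v ⬝ᵥ A.mulVec w

/-- Energy variance ⟨ψ|H²|ψ⟩ − ⟨ψ|H|ψ⟩² of a (unit) vector ψ. -/
noncomputable def variance {n : Type*} [Fintype n] (H : Matrix n n ℂ) (v : n → ℂ) : ℝ :=
  (matElem v (H * H) v).re - ((matElem v H v).re) ^ 2

/-- Quantum Fisher information computed from a spectral decomposition
`ρ = ∑ j, p j • |ψ j⟩⟨ψ j|`; terms with `p j + p k = 0` are omitted. -/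
noncomputable def QFI {ι : Type*} [Fintype ι] {n : Type*} [Fintype n]
    (p : ι → ℝ) (ψ : ι → n → ℂ) (H : Matrix n n ℂ) : ℝ :=
  2 * ∑ j, ∑ k, if p j + p k = 0 then 0 else
    (p j - p k) ^ 2 / (p j + p k) * Complex.normSq (matElem (ψ j) H (ψ k))

/-- Rank-one operator |v⟩⟨w| as a matrix. -/
noncomputable def ketbra {n : Type*} (v w : n → ℂ) : Matrix n n ℂ :=
  fun i j => v i * star (w j)


set_option linter.unusedSectionVars false
namespace PurAux
open Kronecker
variable {n ι : Type*} [Fintype n] [Fintype ι]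
variable {n ι : Type*} [Fintype n] [Fintype ι]

lemma dot1 (c : ι → ℂ) (v : ι → n → ℂ) (w : n → ℂ) :
    star (∑ i, c i • v i) ⬝ᵥ w = ∑ i, star (c i) * (star (v i) ⬝ᵥ w) := by
  simp only [dotProduct, Pi.star_apply, Finset.sum_apply, Pi.smul_apply, smul_eq_mul,
    star_sum, star_mul', Finset.sum_mul, Finset.mul_sum]
  rw [Finset.sum_comm]
  exact Finset.sum_congr rfl fun i _ => Finset.sum_congr rfl fun q _ => by ring

lemma dot2 (c : ι → ℂ) (v : ι → n → ℂ) (w : n → ℂ) :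
    w ⬝ᵥ (∑ i, c i • v i) = ∑ i, c i * (w ⬝ᵥ v i) := by
  simp only [dotProduct, Finset.sum_apply, Pi.smul_apply, smul_eq_mul, Finset.mul_sum]
  rw [Finset.sum_comm]
  exact Finset.sum_congr rfl fun i _ => Finset.sum_congr rfl fun q _ => by ring

lemma sum_mulVec' (M : ι → Matrix n n ℂ) (v : n → ℂ) :
    (∑ i, M i) *ᵥ v = ∑ i, M i *ᵥ v := by
  funext q
  simp only [Matrix.mulVec, dotProduct, Matrix.sum_apply, Finset.sum_mul,
    Finset.sum_apply]
  rw [Finset.sum_comm]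

lemma mulVec_sum' (M : Matrix n n ℂ) (c : ι → ℂ) (v : ι → n → ℂ) :
    M *ᵥ (∑ i, c i • v i) = ∑ i, c i • (M *ᵥ v i) := by
  funext q
  simp only [Matrix.mulVec, dotProduct, Finset.sum_apply, Pi.smul_apply, smul_eq_mul,
    Finset.mul_sum]
  rw [Finset.sum_comm]
  exact Finset.sum_congr rfl fun i _ => Finset.sum_congr rfl fun r _ => by ring

lemma herm_dot (A : Matrix n n ℂ) (hA : Aᴴ = A) (v w : n → ℂ) :
    star v ⬝ᵥ (A *ᵥ w) = star (A *ᵥ v) ⬝ᵥ w := by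
  have hAe : ∀ i j, star (A j i) = A i j := by
    intro i j
    conv_rhs => rw [← hA]
    rfl
  simp only [dotProduct, Pi.star_apply, Matrix.mulVec, Finset.mul_sum, star_sum, star_mul',
    star_star, Finset.sum_mul]
  rw [Finset.sum_comm]
  exact Finset.sum_congr rfl fun i _ => Finset.sum_congr rfl fun j _ => by
    rw [← hAe i j]; simp only [star_star]; ring


lemma ketbra_mulVec (v w u : n → ℂ) : (ketbra v w) *ᵥ u = (star w ⬝ᵥ u) • v := by
  funext q
  simp only [ketbra, Matrix.mulVec, dotProduct, Pi.smul_apply, smul_eq_mul, Finset.sum_mul,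
    Pi.star_apply]
  exact Finset.sum_congr rfl fun r _ => by ring

lemma ketbra_conjTranspose (v w : n → ℂ) : (ketbra v w)ᴴ = ketbra w v := by
  ext i j
  simp only [ketbra, conjTranspose_apply, star_mul', star_star]
  ring

lemma kron_conjTranspose (A B : Matrix n n ℂ) : (A ⊗ₖ B)ᴴ = Aᴴ ⊗ₖ Bᴴ := by
  ext i j
  simp only [conjTranspose_apply, kroneckerMap_apply, star_mul']

lemma kron_mulVec (A B : Matrix n n ℂ) (u v : n → ℂ) :
    (A ⊗ₖ B) *ᵥ (fun q : n × n => u q.1 * v q.2)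
      = fun q : n × n => (A *ᵥ u) q.1 * (B *ᵥ v) q.2 := by
  funext q
  simp only [Matrix.mulVec, dotProduct, Fintype.sum_prod_type, kroneckerMap_apply]
  rw [Finset.sum_mul_sum]
  exact Finset.sum_congr rfl fun r _ => Finset.sum_congr rfl fun s _ => by ring

lemma matElem_conj {A : Matrix n n ℂ} (hA : Aᴴ = A) (v w : n → ℂ) :
    star (matElem v A w) = matElem w A v := by
  have hAe : ∀ i j, star (A j i) = A i j := by
    intro i j; conv_rhs => rw [← hA]
    rfl
  simp only [matElem, dotProduct, Matrix.mulVec, Pi.star_apply, star_sum, star_mul', star_star,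
    Finset.mul_sum, Finset.sum_mul]
  rw [Finset.sum_comm]
  refine Finset.sum_congr rfl fun i _ => Finset.sum_congr rfl fun j _ => ?_
  rw [← hAe j i]
  simp only [star_star]
  ring

end PurAux

open Kronecker in
/-- The optimal purification |Φ_ρ⟩ = Σ_i √p_i |φ_i⟩⊗|φ_i⟩, with the auxiliary
Hamiltonian H_A = −2 Σ_{ij} (√(p_i p_j)/(p_i+p_j)) ⟨φ_i|H_S|φ_j⟩ |φ_j⟩⟨φ_i|,
has total-energy variance equal to (1/4) F_{H_S}(ρ). -/
theorem purification_variance_eq_quarter_qfi {d : ℕ}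
    (HS : Matrix (Fin d) (Fin d) ℂ) (hH : HS.IsHermitian)
    (p : Fin d → ℝ) (φ : Fin d → Fin d → ℂ)
    (horth : ∀ i j, star (φ i) ⬝ᵥ φ j = if i = j then (1 : ℂ) else 0)
    (hp : ∀ j, 0 < p j) (hsum : ∑ j, p j = 1)
    (HA : Matrix (Fin d) (Fin d) ℂ)
    (hHA : HA = ∑ i, ∑ j,
      ((((-2 : ℝ) * Real.sqrt (p i * p j) / (p i + p j) : ℝ) : ℂ) *
          matElem (φ i) HS (φ j)) • ketbra (φ j) (φ i))
    (Φ : Fin d × Fin d → ℂ)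
    (hΦ : Φ = fun q => ∑ i, ((Real.sqrt (p i) : ℝ) : ℂ) * φ i q.1 * φ i q.2)
    (Htot : Matrix (Fin d × Fin d) (Fin d × Fin d) ℂ)
    (hHtot : Htot = HS ⊗ₖ (1 : Matrix (Fin d) (Fin d) ℂ) +
      (1 : Matrix (Fin d) (Fin d) ℂ) ⊗ₖ HA) :
    variance Htot Φ = (1 / 4) * QFI p φ HS ∧
      variance Htot Φ = (1 / 2) * ∑ i, ∑ j,
        (p i - p j) ^ 2 / (p i + p j) * Complex.normSq (matElem (φ i) HS (φ j)) := by
  classical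
  have hp2 : ∀ j, (0:ℝ) ≤ p j := fun j => (hp j).le
  have hps : ∀ k l : Fin d, p k + p l ≠ 0 := fun k l => (add_pos (hp k) (hp l)).ne'
  -- notation
  set sC : Fin d → ℂ := fun i => ((Real.sqrt (p i) : ℝ) : ℂ) with hsC
  set cC : Fin d → Fin d → ℂ := fun i j =>
    ((((-2 : ℝ) * Real.sqrt (p i * p j) / (p i + p j) : ℝ) : ℂ) *
      matElem (φ i) HS (φ j)) with hcC
  set ε : Fin d × Fin d → Fin d × Fin d → ℂ := fun a q => φ a.1 q.1 * φ a.2 q.2 with hε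
  set T : Fin d → Fin d → ℂ := fun k l =>
    ((Real.sqrt (p l) * (p l - p k) / (p k + p l) : ℝ) : ℂ) * matElem (φ k) HS (φ l) with hT
  set N : Fin d → Fin d → ℝ := fun k l => Complex.normSq (matElem (φ k) HS (φ l)) with hN
  have hHeq : HSᴴ = HS := hH
  have hmsym : ∀ i j, star (matElem (φ i) HS (φ j)) = matElem (φ j) HS (φ i) :=
    fun i j => PurAux.matElem_conj hHeq _ _
  -- orthonormality of the product basis
  have horthε : ∀ a b, star (ε a) ⬝ᵥ ε b = if a = b then (1:ℂ) else 0 := by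
    intro a b
    have : star (ε a) ⬝ᵥ ε b = (star (φ a.1) ⬝ᵥ φ b.1) * (star (φ a.2) ⬝ᵥ φ b.2) := by
      simp only [dotProduct, Pi.star_apply, hε, star_mul']
      rw [Finset.sum_mul_sum, Fintype.sum_prod_type]
      exact Finset.sum_congr rfl fun q _ => Finset.sum_congr rfl fun r _ => by ring
    rw [this, horth, horth]
    by_cases h1 : a.1 = b.1 <;> by_cases h2 : a.2 = b.2 <;>
      simp [h1, h2, Prod.ext_iff]
  -- completeness
  have hcomp : ∀ q q' : Fin d, ∑ i, φ i q * star (φ i q') = if q = q' then (1:ℂ) else 0 := by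
    set V : Matrix (Fin d) (Fin d) ℂ := Matrix.of fun q i => φ i q with hV
    have hVV : Vᴴ * V = 1 := by
      ext i j
      simpa [Matrix.mul_apply, Matrix.one_apply, Matrix.conjTranspose_apply, hV,
        dotProduct] using horth i j
    have hVV' : V * Vᴴ = 1 := mul_eq_one_comm.mp hVV
    intro q q'
    have h := congrFun (congrFun hVV' q) q'
    simpa [Matrix.mul_apply, Matrix.one_apply, Matrix.conjTranspose_apply, hV] using h
  -- Φ in the product basis
  have hΦε : Φ = ∑ i, sC i • ε (i, i) := by
    funext q
    simp only [hΦ, hε, hsC, Finset.sum_apply, Pi.smul_apply, smul_eq_mul]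
    exact Finset.sum_congr rfl fun i _ => by ring
  -- action of HS on the basis
  have hHSvec : ∀ j, HS *ᵥ φ j = ∑ k, matElem (φ k) HS (φ j) • φ k := by
    intro j
    funext q
    simp only [Finset.sum_apply, Pi.smul_apply, smul_eq_mul, matElem, dotProduct, Pi.star_apply]
    have step1 : ∀ k : Fin d,
        (∑ q1, star (φ k q1) * (HS *ᵥ φ j) q1) * φ k q
          = ∑ q1, (φ k q * star (φ k q1)) * (HS *ᵥ φ j) q1 := by
      intro k
      rw [Finset.sum_mul]
      exact Finset.sum_congr rfl fun q1 _ => by ring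
    rw [Finset.sum_congr rfl fun k _ => step1 k, Finset.sum_comm]
    have : ∀ q1, ∑ k, (φ k q * star (φ k q1)) * (HS *ᵥ φ j) q1
        = (if q = q1 then (1:ℂ) else 0) * (HS *ᵥ φ j) q1 := by
      intro q1
      rw [← Finset.sum_mul, hcomp]
    rw [Finset.sum_congr rfl fun q1 _ => this q1]
    simp
  -- action of HA on the basis
  have hHAvec : ∀ j, HA *ᵥ φ j = ∑ m, cC j m • φ m := by
    intro j
    rw [hHA, PurAux.sum_mulVec']
    have : ∀ i : Fin d, (∑ m, (cC i m) • ketbra (φ m) (φ i)) *ᵥ φ j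
        = if i = j then ∑ m, cC i m • φ m else 0 := by
      intro i
      rw [PurAux.sum_mulVec']
      by_cases h : i = j
      · subst h
        rw [if_pos rfl]
        refine Finset.sum_congr rfl fun m _ => ?_
        rw [Matrix.smul_mulVec, PurAux.ketbra_mulVec, horth]
        simp
      · rw [if_neg h]
        refine Finset.sum_eq_zero fun m _ => ?_
        rw [Matrix.smul_mulVec, PurAux.ketbra_mulVec, horth]
        simp [h]
    rw [Finset.sum_congr rfl fun i _ => this i]
    simp
  -- the vector Htot Φ in the product basis
  have hcoef : ∀ k l, sC l * matElem (φ k) HS (φ l) + sC k * cC k l = T k l := by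
    intro k l
    have e1 : Real.sqrt (p k * p l) = Real.sqrt (p k) * Real.sqrt (p l) :=
      Real.sqrt_mul (hp2 k) _
    have e2 : Real.sqrt (p k) * Real.sqrt (p k) = p k := Real.mul_self_sqrt (hp2 k)
    have hr : Real.sqrt (p l) + Real.sqrt (p k) * ((-2) * Real.sqrt (p k * p l) / (p k + p l))
        = Real.sqrt (p l) * (p l - p k) / (p k + p l) := by
      rw [e1]
      field_simp [hps k l]
      linear_combination (-2 * Real.sqrt (p l)) * e2
    calc sC l * matElem (φ k) HS (φ l) + sC k * cC k l
        = ((Real.sqrt (p l) + Real.sqrt (p k) *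
            ((-2) * Real.sqrt (p k * p l) / (p k + p l)) : ℝ) : ℂ)
            * matElem (φ k) HS (φ l) := by
          simp only [hsC, hcC]
          push_cast
          ring
      _ = T k l := by rw [hr]
  have hw : Htot *ᵥ Φ = ∑ k, ∑ l, T k l • ε (k, l) := by
    have h1 : ∀ i : Fin d, (HS ⊗ₖ (1 : Matrix (Fin d) (Fin d) ℂ)) *ᵥ ε (i, i)
        = ∑ k, matElem (φ k) HS (φ i) • ε (k, i) := by
      intro i
      have hk := PurAux.kron_mulVec HS (1 : Matrix (Fin d) (Fin d) ℂ) (φ i) (φ i)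
      rw [Matrix.one_mulVec] at hk
      funext q
      have hq : ((HS ⊗ₖ (1 : Matrix (Fin d) (Fin d) ℂ)) *ᵥ ε (i, i)) q
          = (HS *ᵥ φ i) q.1 * φ i q.2 := congrFun hk q
      rw [hq, hHSvec i]
      simp only [Finset.sum_apply, Pi.smul_apply, smul_eq_mul, Finset.sum_mul, hε]
      exact Finset.sum_congr rfl fun k _ => by ring
    have h2 : ∀ i : Fin d, ((1 : Matrix (Fin d) (Fin d) ℂ) ⊗ₖ HA) *ᵥ ε (i, i)
        = ∑ m, cC i m • ε (i, m) := by
      intro i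
      have hk := PurAux.kron_mulVec (1 : Matrix (Fin d) (Fin d) ℂ) HA (φ i) (φ i)
      rw [Matrix.one_mulVec] at hk
      funext q
      have hq : (((1 : Matrix (Fin d) (Fin d) ℂ) ⊗ₖ HA) *ᵥ ε (i, i)) q
          = φ i q.1 * (HA *ᵥ φ i) q.2 := congrFun hk q
      rw [hq, hHAvec i]
      simp only [Finset.sum_apply, Pi.smul_apply, smul_eq_mul, Finset.mul_sum, hε]
      exact Finset.sum_congr rfl fun m _ => by ring
    rw [hΦε, hHtot, PurAux.mulVec_sum']
    have h3 : ∀ i : Fin d,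
        (HS ⊗ₖ (1 : Matrix (Fin d) (Fin d) ℂ) + (1 : Matrix (Fin d) (Fin d) ℂ) ⊗ₖ HA) *ᵥ ε (i, i)
        = (∑ k, matElem (φ k) HS (φ i) • ε (k, i)) + ∑ m, cC i m • ε (i, m) := by
      intro i
      rw [Matrix.add_mulVec, h1 i, h2 i]
    calc ∑ i, sC i •
          ((HS ⊗ₖ (1 : Matrix (Fin d) (Fin d) ℂ) + (1 : Matrix (Fin d) (Fin d) ℂ) ⊗ₖ HA) *ᵥ ε (i, i))
        = ∑ i, ((∑ k, (sC i * matElem (φ k) HS (φ i)) • ε (k, i))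
            + ∑ m, (sC i * cC i m) • ε (i, m)) := by
          refine Finset.sum_congr rfl fun i _ => ?_
          rw [h3 i, smul_add, Finset.smul_sum, Finset.smul_sum]
          simp only [smul_smul]
      _ = (∑ i, ∑ k, (sC i * matElem (φ k) HS (φ i)) • ε (k, i))
            + ∑ i, ∑ m, (sC i * cC i m) • ε (i, m) := Finset.sum_add_distrib
      _ = (∑ k, ∑ l, (sC l * matElem (φ k) HS (φ l)) • ε (k, l))
            + ∑ k, ∑ l, (sC k * cC k l) • ε (k, l) := by rw [Finset.sum_comm]
      _ = ∑ k, ∑ l, ((sC l * matElem (φ k) HS (φ l)) • ε (k, l)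
            + (sC k * cC k l) • ε (k, l)) := by
          rw [← Finset.sum_add_distrib]
          exact Finset.sum_congr rfl fun k _ => Finset.sum_add_distrib.symm
      _ = ∑ k, ∑ l, T k l • ε (k, l) := by
          refine Finset.sum_congr rfl fun k _ => Finset.sum_congr rfl fun l _ => ?_
          rw [← add_smul, hcoef k l]
  have hw' : Htot *ᵥ Φ = ∑ a : Fin d × Fin d, T a.1 a.2 • ε a := by
    rw [hw, Fintype.sum_prod_type]
  -- the mean vanishes
  have hmean : matElem Φ Htot Φ = 0 := by
    rw [matElem, hw', PurAux.dot2]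
    refine Finset.sum_eq_zero fun a _ => ?_
    by_cases h : a.1 = a.2
    · have hT0 : T a.1 a.2 = 0 := by
        rw [hT]
        simp [h]
      rw [hT0, zero_mul]
    · have hd : star Φ ⬝ᵥ ε a = 0 := by
        rw [hΦε, PurAux.dot1]
        refine Finset.sum_eq_zero fun i _ => ?_
        rw [horthε]
        have hne : ¬((i, i) = a) := by
          intro hia
          apply h
          rw [← hia]
        rw [if_neg hne, mul_zero]
      rw [hd, mul_zero]
  -- the second moment
  have hAherm : HAᴴ = HA := by
    rw [hHA]
    simp only [Matrix.conjTranspose_sum, Matrix.conjTranspose_smul, PurAux.ketbra_conjTranspose]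
    rw [Finset.sum_comm]
    refine Finset.sum_congr rfl fun i _ => Finset.sum_congr rfl fun j _ => ?_
    congr 1
    have h1 : star ((((-2 : ℝ) * Real.sqrt (p j * p i) / (p j + p i) : ℝ) : ℂ))
        = ((((-2 : ℝ) * Real.sqrt (p i * p j) / (p i + p j) : ℝ) : ℂ)) := by
      rw [Complex.star_def, Complex.conj_ofReal, mul_comm (p j) (p i), add_comm (p j) (p i)]
    rw [star_mul', hmsym j i, h1]
  have hherm : Htotᴴ = Htot := by
    rw [hHtot, Matrix.conjTranspose_add, PurAux.kron_conjTranspose, PurAux.kron_conjTranspose,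
      Matrix.conjTranspose_one, hHeq, hAherm]
  have hsecond : matElem Φ (Htot * Htot) Φ = ((∑ k, ∑ l, Complex.normSq (T k l) : ℝ) : ℂ) := by
    rw [matElem, ← Matrix.mulVec_mulVec, PurAux.herm_dot Htot hherm, hw', PurAux.dot1]
    have hd : ∀ a : Fin d × Fin d,
        star (ε a) ⬝ᵥ (∑ b : Fin d × Fin d, T b.1 b.2 • ε b) = T a.1 a.2 := by
      intro a
      rw [PurAux.dot2]
      have ht : ∀ b : Fin d × Fin d, T b.1 b.2 * (star (ε a) ⬝ᵥ ε b)
          = if b = a then T b.1 b.2 else 0 := by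
        intro b
        rw [horthε a b]
        by_cases h : a = b
        · simp [h]
        · simp [h, Ne.symm h]
      rw [Finset.sum_congr rfl fun b _ => ht b, Finset.sum_ite_eq' Finset.univ a]
      simp
    rw [Finset.sum_congr rfl fun a _ => by rw [hd a]]
    have hns : ∀ a : Fin d × Fin d, star (T a.1 a.2) * T a.1 a.2
        = ((Complex.normSq (T a.1 a.2) : ℝ) : ℂ) := by
      intro a
      rw [Complex.star_def, mul_comm, Complex.mul_conj]
    rw [Finset.sum_congr rfl fun a _ => hns a]
    push_cast
    rw [Fintype.sum_prod_type]
  -- variance value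
  have hvar : variance Htot Φ = ∑ k, ∑ l, Complex.normSq (T k l) := by
    rw [variance, hmean, hsecond]
    simp
  -- normSq of T
  have hTval : ∀ k l, Complex.normSq (T k l) = p l * (p l - p k)^2 / (p k + p l)^2 * N k l := by
    intro k l
    rw [hT]
    simp only [Complex.normSq_mul, Complex.normSq_ofReal, hN]
    have : Real.sqrt (p l) * (p l - p k) / (p k + p l) * (Real.sqrt (p l) * (p l - p k) / (p k + p l))
        = p l * (p l - p k)^2 / (p k + p l)^2 := by
      have e2 : Real.sqrt (p l) * Real.sqrt (p l) = p l := Real.mul_self_sqrt (hp2 l)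
      rw [show p l * (p l - p k)^2 / (p k + p l)^2
          = (Real.sqrt (p l) * Real.sqrt (p l)) * (p l - p k)^2 / (p k + p l)^2 by rw [e2]]
      rw [div_mul_div_comm, sq (p k + p l)]
      ring
    rw [this]
  -- symmetrization
  have hNsym : ∀ i j, N i j = N j i := by
    intro i j
    simp only [hN]
    rw [← hmsym i j, Complex.star_def, Complex.normSq_conj]
  have hkey : (∑ k, ∑ l, Complex.normSq (T k l))
      = (1 / 2) * ∑ i, ∑ j, (p i - p j) ^ 2 / (p i + p j) * N i j := by
    have hS : (∑ k, ∑ l, Complex.normSq (T k l))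
        = ∑ k, ∑ l, p l * (p l - p k)^2 / (p k + p l)^2 * N k l :=
      Finset.sum_congr rfl fun k _ => Finset.sum_congr rfl fun l _ => hTval k l
    have hS2 : (∑ k, ∑ l, p l * (p l - p k)^2 / (p k + p l)^2 * N k l)
        = ∑ k, ∑ l, p k * (p k - p l)^2 / (p k + p l)^2 * N k l := by
      rw [Finset.sum_comm]
      refine Finset.sum_congr rfl fun k _ => Finset.sum_congr rfl fun l _ => ?_
      rw [hNsym l k]
      ring
    have h2S : (2:ℝ) * (∑ k, ∑ l, p l * (p l - p k)^2 / (p k + p l)^2 * N k l)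
        = ∑ i, ∑ j, (p i - p j)^2 / (p i + p j) * N i j := by
      have hsplit : (2:ℝ) * (∑ k, ∑ l, p l * (p l - p k)^2 / (p k + p l)^2 * N k l)
          = (∑ k, ∑ l, p l * (p l - p k)^2 / (p k + p l)^2 * N k l)
            + ∑ k, ∑ l, p k * (p k - p l)^2 / (p k + p l)^2 * N k l := by
        rw [← hS2]
        ring
      rw [hsplit, ← Finset.sum_add_distrib]
      refine Finset.sum_congr rfl fun k _ => ?_
      rw [← Finset.sum_add_distrib]
      refine Finset.sum_congr rfl fun l _ => ?_
      have hs := hps k l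
      field_simp
      ring
    rw [hS]
    linarith [h2S]
  have hmain : variance Htot Φ = (1 / 2) * ∑ i, ∑ j,
      (p i - p j) ^ 2 / (p i + p j) * Complex.normSq (matElem (φ i) HS (φ j)) := by
    rw [hvar, hkey]
  refine ⟨?_, hmain⟩
  rw [hmain, QFI]
  have : ∀ j k : Fin d, (if p j + p k = 0 then (0:ℝ) else
      (p j - p k) ^ 2 / (p j + p k) * Complex.normSq (matElem (φ j) HS (φ k)))
      = (p j - p k) ^ 2 / (p j + p k) * Complex.normSq (matElem (φ j) HS (φ k)) :=
    fun j k => if_neg (hps j k)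
  rw [Finset.sum_congr rfl fun j _ => Finset.sum_congr rfl fun k _ => this j k]
  ring
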